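/- The sample variance σ̂² = (1/(n−1)) Σ_{i=1}^n (p̂_i − p̄)², where p̄ = (1/n)Σ_i p̂_i, satisfies E[σ̂²] = σ² + (μ − μ² − σ²)/k; i.e., it is a biased estimator of σ² with bias equal to the expected within-prompt variance (μ(1−μ) − σ²)/k. -/

import Mathlib

open MeasureTheory ProbabilityTheory

/-- Helper: sum over `Fin m` of a function that takes value `a` at one point and `b`
elsewhere. -/
lemma sum_split_diag {m : ℕ} (g : Fin m → ℝ) (j : Fin m) (a b : ℝ)
    (hg : ∀ j', g j' = if j' = j then a else b) :
    ∑ j', g j' = a + ((m : ℝ) - 1) * b := by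
  have h : ∀ j', g j' = b + (if j' = j then a - b else 0) := fun j' => by
    rw [hg]; split <;> ring
  rw [Finset.sum_congr rfl fun j' _ => h j', Finset.sum_add_distrib, Finset.sum_const,
    Finset.sum_ite_eq' Finset.univ j fun _ => a - b]
  simp [Finset.card_univ]
  ring

/-- The sample variance of the p̂ᵢ satisfies E[σ̂²] = σ² + (μ − μ² − σ²)/k. -/
theorem sample_variance_bias
    {Ω : Type*} [MeasurableSpace Ω] (P : Measure Ω) [IsProbabilityMeasure P]
    (n k : ℕ) (hn : 2 ≤ n) (hk : 0 < k)
    (p : Fin n → Ω → ℝ) (Y : Fin n → Fin k → Ω → ℝ) (μ σ2 : ℝ)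
    (hpmeas : ∀ i, Measurable (p i))
    (hprange : ∀ i ω, p i ω ∈ Set.Icc (0 : ℝ) 1)
    (hpiid : iIndepFun p P)
    (hpmean : ∀ i, ∫ ω, p i ω ∂P = μ)
    (hpvar : ∀ i, variance (p i) P = σ2)
    (hYmeas : ∀ i j, Measurable (Y i j))
    (hY01 : ∀ i j ω, Y i j ω = 0 ∨ Y i j ω = 1)
    (hcond : ∀ i j,
      P[Y i j | ⨆ i', MeasurableSpace.comap (p i') inferInstance] =ᵐ[P] p i)
    (hcondprod : ∀ i j i' j', (i, j) ≠ (i', j') →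
      P[fun ω => Y i j ω * Y i' j' ω |
          ⨆ i'', MeasurableSpace.comap (p i'') inferInstance]
        =ᵐ[P] fun ω => p i ω * p i' ω) :
    ∫ ω, ((n : ℝ) - 1)⁻¹ *
        ∑ i, (((k : ℝ)⁻¹ * ∑ j, Y i j ω)
          - (n : ℝ)⁻¹ * ∑ i', (k : ℝ)⁻¹ * ∑ j, Y i' j ω) ^ 2 ∂P
      = σ2 + (μ - μ ^ 2 - σ2) / k := by
  have hk0 : (k : ℝ) ≠ 0 := Nat.cast_ne_zero.mpr hk.ne'
  have hn0 : (n : ℝ) ≠ 0 := Nat.cast_ne_zero.mpr (by omega)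
  have hn1 : (n : ℝ) - 1 ≠ 0 := by
    have : (2 : ℝ) ≤ (n : ℝ) := by exact_mod_cast hn
    linarith
  have hm : (⨆ i', MeasurableSpace.comap (p i') inferInstance) ≤ ‹MeasurableSpace Ω› :=
    iSup_le fun i' => measurable_iff_comap_le.mp (hpmeas i')
  haveI : SigmaFinite (P.trim hm) := sigmaFiniteTrim_mono hm le_rfl
  -- boundedness and integrability
  have hYbd : ∀ i j ω, |Y i j ω| ≤ 1 := fun i j ω => by
    rcases hY01 i j ω with h | h <;> simp [h]
  have hYint : ∀ i j, Integrable (Y i j) P := fun i j =>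
    (integrable_const (1 : ℝ)).mono' (hYmeas i j).aestronglyMeasurable
      (Filter.Eventually.of_forall fun ω => by simpa using hYbd i j ω)
  have hYYint : ∀ i j i' j', Integrable (fun ω => Y i j ω * Y i' j' ω) P := fun i j i' j' =>
    (integrable_const (1 : ℝ)).mono' ((hYmeas i j).mul (hYmeas i' j')).aestronglyMeasurable
      (Filter.Eventually.of_forall fun ω => by
        rw [Real.norm_eq_abs, abs_mul]
        exact mul_le_one₀ (hYbd i j ω) (abs_nonneg _) (hYbd i' j' ω))
  -- E[Y i j] = μ
  have hEY : ∀ i j, ∫ ω, Y i j ω ∂P = μ := fun i j =>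
    calc ∫ ω, Y i j ω ∂P
        = ∫ ω, (P[Y i j | ⨆ i', MeasurableSpace.comap (p i') inferInstance]) ω ∂P :=
          (integral_condExp hm).symm
      _ = ∫ ω, p i ω ∂P := integral_congr_ae (hcond i j)
      _ = μ := hpmean i
  -- E[Y i j * Y i' j'] = E[p i * p i'] off the diagonal
  have hEYY : ∀ i j i' j', (i, j) ≠ (i', j') →
      ∫ ω, Y i j ω * Y i' j' ω ∂P = ∫ ω, p i ω * p i' ω ∂P := fun i j i' j' h =>
    calc ∫ ω, Y i j ω * Y i' j' ω ∂P
        = ∫ ω, (P[fun ω => Y i j ω * Y i' j' ω |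
            ⨆ i'', MeasurableSpace.comap (p i'') inferInstance]) ω ∂P :=
          (integral_condExp hm).symm
      _ = ∫ ω, p i ω * p i' ω ∂P := integral_congr_ae (hcondprod i j i' j' h)
  -- E[p i * p i'] = μ² for i ≠ i'
  have hEpp : ∀ i i', i ≠ i' → ∫ ω, p i ω * p i' ω ∂P = μ * μ := fun i i' h => by
    rw [(hpiid.indepFun h).integral_fun_mul_eq_mul_integral (hpmeas i).aestronglyMeasurable
      (hpmeas i').aestronglyMeasurable, hpmean, hpmean]
  -- E[p i ^ 2] = σ2 + μ²
  have hEp2 : ∀ i, ∫ ω, p i ω * p i ω ∂P = σ2 + μ * μ := fun i => by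
    have hmem : MemLp (p i) 2 P :=
      (memLp_top_of_bound (hpmeas i).aestronglyMeasurable 1
        (Filter.Eventually.of_forall fun ω => by
          rw [Real.norm_eq_abs, abs_le]
          exact ⟨by linarith [(hprange i ω).1], (hprange i ω).2⟩)).mono_exponent le_top
    have hv := variance_eq_sub hmem
    rw [hpvar i, hpmean i] at hv
    have h2 : ∫ ω, (p i ^ 2) ω ∂P = ∫ ω, p i ω * p i ω ∂P := by
      apply integral_congr_ae
      filter_upwards with ω
      simp [sq]
    rw [h2] at hv
    linarith
  -- complete table of E[Y i j * Y i' j']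
  have hEYYval : ∀ i j i' j', ∫ ω, Y i j ω * Y i' j' ω ∂P =
      if i = i' then (if j = j' then μ else σ2 + μ * μ) else μ * μ := by
    intro i j i' j'
    by_cases hii : i = i'
    · subst hii
      rw [if_pos rfl]
      by_cases hjj : j = j'
      · subst hjj
        rw [if_pos rfl]
        have : (fun ω => Y i j ω * Y i j ω) = fun ω => Y i j ω := funext fun ω => by
          rcases hY01 i j ω with h | h <;> simp [h]
        rw [this, hEY]
      · rw [if_neg hjj, hEYY i j i j' (by simp [hjj]), hEp2]
    · rw [if_neg hii, hEYY i j i' j' (by simp [hii]), hEpp i i' hii]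
  -- p̂ and its second moments
  set f : Fin n → Ω → ℝ := fun i ω => (k : ℝ)⁻¹ * ∑ j, Y i j ω with hf
  have hrw : ∀ i i' : Fin n, (fun ω => f i ω * f i' ω)
      = fun ω => (k : ℝ)⁻¹ * ((k : ℝ)⁻¹ * ∑ j, ∑ j', Y i j ω * Y i' j' ω) := by
    intro i i'
    funext ω
    simp only [hf]
    rw [← Fintype.sum_mul_sum]
    ring
  have hfint : ∀ i i' : Fin n, Integrable (fun ω => f i ω * f i' ω) P := fun i i' => by
    rw [hrw i i']
    exact ((integrable_finset_sum _ fun j _ =>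
      integrable_finset_sum _ fun j' _ => hYYint i j i' j').const_mul _).const_mul _
  have hfI : ∀ i i' : Fin n, ∫ ω, f i ω * f i' ω ∂P
      = (k : ℝ)⁻¹ * ((k : ℝ)⁻¹ * ∑ j, ∑ j', ∫ ω, Y i j ω * Y i' j' ω ∂P) := fun i i' => by
    rw [hrw i i', integral_const_mul, integral_const_mul,
      integral_finset_sum _ fun j _ => integrable_finset_sum _ fun j' _ => hYYint i j i' j']
    congr 2
    exact Finset.sum_congr rfl fun j _ =>
      integral_finset_sum _ fun j' _ => hYYint i j i' j'
  set A : ℝ := (k : ℝ)⁻¹ * (μ + ((k : ℝ) - 1) * (σ2 + μ * μ)) with hA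
  have hfii : ∀ i, ∫ ω, f i ω * f i ω ∂P = A := fun i => by
    rw [hfI i i]
    have hinner : ∀ j : Fin k, ∑ j', ∫ ω, Y i j ω * Y i j' ω ∂P
        = μ + ((k : ℝ) - 1) * (σ2 + μ * μ) := fun j => by
      apply sum_split_diag _ j
      intro j'
      rw [hEYYval i j i j', if_pos rfl]
      by_cases h : j' = j
      · subst h; rfl
      · rw [if_neg fun hh => h hh.symm, if_neg h]
    rw [Finset.sum_congr rfl fun j _ => hinner j, Finset.sum_const, Finset.card_univ,
      Fintype.card_fin, nsmul_eq_mul, hA]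
    field_simp
  have hfij : ∀ i i', i ≠ i' → ∫ ω, f i ω * f i' ω ∂P = μ * μ := fun i i' h => by
    rw [hfI i i']
    have : ∀ j : Fin k, ∑ j', ∫ ω, Y i j ω * Y i' j' ω ∂P = (k : ℝ) * (μ * μ) := fun j => by
      rw [Finset.sum_congr rfl fun j' _ => by rw [hEYYval i j i' j', if_neg h],
        Finset.sum_const, Finset.card_univ, Fintype.card_fin, nsmul_eq_mul]
    rw [Finset.sum_congr rfl fun j _ => this j, Finset.sum_const, Finset.card_univ,
      Fintype.card_fin, nsmul_eq_mul]
    field_simp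
  -- rewrite the integrand
  have hptw : ∀ ω, ((n : ℝ) - 1)⁻¹ *
        ∑ i, (((k : ℝ)⁻¹ * ∑ j, Y i j ω)
          - (n : ℝ)⁻¹ * ∑ i', (k : ℝ)⁻¹ * ∑ j, Y i' j ω) ^ 2
      = ((n : ℝ) - 1)⁻¹ * ∑ i, f i ω * f i ω
        - ((n : ℝ) - 1)⁻¹ * ((n : ℝ)⁻¹ * ∑ i, ∑ i', f i ω * f i' ω) := by
    intro ω
    have hSS : ∑ i, ∑ i', f i ω * f i' ω = (∑ i, f i ω) * (∑ i', f i' ω) :=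
      (Fintype.sum_mul_sum _ _).symm
    have hexp : ∀ i : Fin n, (f i ω - (n : ℝ)⁻¹ * ∑ i', f i' ω) ^ 2
        = f i ω * f i ω - (2 * (n : ℝ)⁻¹ * ∑ i', f i' ω) * f i ω
          + ((n : ℝ)⁻¹ * ∑ i', f i' ω) ^ 2 := fun i => by ring
    have h1 : ∑ i, (f i ω - (n : ℝ)⁻¹ * ∑ i', f i' ω) ^ 2
        = ∑ i, f i ω * f i ω - (2 * (n : ℝ)⁻¹ * ∑ i', f i' ω) * ∑ i, f i ω
          + (n : ℝ) * ((n : ℝ)⁻¹ * ∑ i', f i' ω) ^ 2 := by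
      rw [Finset.sum_congr rfl fun i _ => hexp i, Finset.sum_add_distrib,
        Finset.sum_sub_distrib, ← Finset.mul_sum, Finset.sum_const, Finset.card_univ,
        Fintype.card_fin, nsmul_eq_mul]
    show ((n : ℝ) - 1)⁻¹ * ∑ i, (f i ω - (n : ℝ)⁻¹ * ∑ i', f i' ω) ^ 2 = _
    rw [h1, hSS]
    field_simp
    ring
  -- compute the integral
  have hint1 : Integrable (fun ω => ((n : ℝ) - 1)⁻¹ * ∑ i, f i ω * f i ω) P :=
    (integrable_finset_sum _ fun i _ => hfint i i).const_mul _
  have hint2 : Integrable (fun ω =>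
      ((n : ℝ) - 1)⁻¹ * ((n : ℝ)⁻¹ * ∑ i, ∑ i', f i ω * f i' ω)) P :=
    (((integrable_finset_sum _ fun i _ =>
      integrable_finset_sum _ fun i' _ => hfint i i').const_mul _).const_mul _)
  calc ∫ ω, ((n : ℝ) - 1)⁻¹ *
        ∑ i, (((k : ℝ)⁻¹ * ∑ j, Y i j ω)
          - (n : ℝ)⁻¹ * ∑ i', (k : ℝ)⁻¹ * ∑ j, Y i' j ω) ^ 2 ∂P
      = ∫ ω, (((n : ℝ) - 1)⁻¹ * ∑ i, f i ω * f i ω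
          - ((n : ℝ) - 1)⁻¹ * ((n : ℝ)⁻¹ * ∑ i, ∑ i', f i ω * f i' ω)) ∂P := by
        exact integral_congr_ae (Filter.Eventually.of_forall hptw)
    _ = ((n : ℝ) - 1)⁻¹ * ∑ i, ∫ ω, f i ω * f i ω ∂P
          - ((n : ℝ) - 1)⁻¹ * ((n : ℝ)⁻¹ * ∑ i, ∑ i', ∫ ω, f i ω * f i' ω ∂P) := by
        rw [integral_sub hint1 hint2, integral_const_mul, integral_const_mul, integral_const_mul,
          integral_finset_sum _ fun i _ => hfint i i,
          integral_finset_sum _ fun i _ => integrable_finset_sum _ fun i' _ => hfint i i']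
        congr 3
        exact Finset.sum_congr rfl fun i _ =>
          integral_finset_sum _ fun i' _ => hfint i i'
    _ = ((n : ℝ) - 1)⁻¹ * ((n : ℝ) * A)
          - ((n : ℝ) - 1)⁻¹ * ((n : ℝ)⁻¹ * ((n : ℝ) * (A + ((n : ℝ) - 1) * (μ * μ)))) := by
        have houter : ∀ i : Fin n, ∑ i', ∫ ω, f i ω * f i' ω ∂P
            = A + ((n : ℝ) - 1) * (μ * μ) := fun i => by
          apply sum_split_diag _ i
          intro i'
          by_cases h : i' = i
          · subst h; rw [if_pos rfl, hfii]
          · rw [if_neg h, hfij i i' fun hh => h hh.symm]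
        rw [Finset.sum_congr rfl fun i _ => hfii i,
          Finset.sum_congr rfl fun i _ => houter i, Finset.sum_const, Finset.sum_const,
          Finset.card_univ, Fintype.card_fin, nsmul_eq_mul, nsmul_eq_mul]
    _ = σ2 + (μ - μ ^ 2 - σ2) / k := by
        rw [hA]
        field_simp
        ring
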